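/- Decomposition of the n-to-one set into injectivity pieces: let ψ : X → Z be a continuous, discrete, open map, D ⊆ X a normal set (open, relatively compact, with ψ(∂D) = ∂ψ(D)), and D_n = { x ∈ D : card(ψ⁻¹(ψ(x)) ∩ D) = n }. Assume ψ restricted to D_n is a local homeomorphism onto its image. Then there exist pairwise disjoint Borel sets D_{n,1}, …, D_{n,n} with D_n = ⋃_{j=1}^n D_{n,j} such that for each j, ψ restricted to D_{n,j} is a bijection onto ψ(D_n). -/

import Mathlib

open Set Topology EMetric
open scoped ENNReal

/-- Decomposition of the `n`-to-one set of a discrete open map on a normal set into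
Borel pieces on each of which the map is a bijection onto the image of the whole set. -/
theorem stmt_8 {X Z : Type*} [MetricSpace X] [MeasurableSpace X] [BorelSpace X]
    [TopologicalSpace.SeparableSpace X] [LocallyCompactSpace X]
    [MetricSpace Z] [TopologicalSpace.SeparableSpace Z] [LocallyCompactSpace Z]
    (ψ : X → Z) (hcont : Continuous ψ) (hopen : IsOpenMap ψ)
    (hdisc : ∀ z : Z, DiscreteTopology (ψ ⁻¹' {z} : Set X))
    (D : Set X) (hD : IsOpen D) (hDc : IsCompact (closure D))
    (hnormal : ψ '' frontier D = frontier (ψ '' D))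
    (n : ℕ) (hn : 1 ≤ n)
    (Dn : Set X) (hDn : Dn = {x ∈ D | (ψ ⁻¹' {ψ x} ∩ D).encard = n})
    (hloc : ∀ x ∈ Dn, ∃ U : Set X, IsOpen U ∧ x ∈ U ∧ Set.InjOn ψ (Dn ∩ U)) :
    ∃ P : Fin n → Set X,
      (∀ j, MeasurableSet (P j)) ∧
      Pairwise (Function.onFun Disjoint P) ∧
      (⋃ j, P j) = Dn ∧
      ∀ j, Set.BijOn ψ (P j) (ψ '' Dn) := by
  classical
  borelize Z
  haveI : SecondCountableTopology X := UniformSpace.secondCountable_of_separable X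
  have hψm : Measurable ψ := hcont.measurable
  -- fibers (within `D`) are finite
  have hfin : ∀ z, (ψ ⁻¹' {z} ∩ D).Finite := by
    intro z
    have hcl : IsClosed (ψ ⁻¹' {z}) := isClosed_singleton.preimage hcont
    have h1 : IsCompact (ψ ⁻¹' {z} ∩ closure D) := hDc.inter_left hcl
    have h2 : (ψ ⁻¹' {z} ∩ closure D).Finite :=
      h1.finite ⟨DiscreteTopology.of_subset (hdisc z) inter_subset_left⟩
    exact h2.subset (inter_subset_inter_right _ subset_closure)
  have hDn' : ∀ x, x ∈ Dn ↔ x ∈ D ∧ (ψ ⁻¹' {ψ x} ∩ D).encard = n := by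
    intro x; rw [hDn]; exact Iff.rfl
  -- the multiplicity function is lower semicontinuous
  set E : ℕ → Set X := fun k => {x | x ∈ D ∧ (k : ℕ∞) ≤ (ψ ⁻¹' {ψ x} ∩ D).encard}
    with hEdef
  have hEopen : ∀ k, IsOpen (E k) := by
    intro k
    rw [isOpen_iff_forall_mem_open]
    rintro x ⟨hxD, hxk⟩
    obtain ⟨U, hU, hdisj⟩ := (hfin (ψ x)).t2_separation
    set W := ⋂ y ∈ (hfin (ψ x)).toFinset, ψ '' (U y ∩ D) with hWdef
    have hWopen : IsOpen W :=
      isOpen_biInter_finset fun y _ => hopen _ ((hU y).2.inter hD)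
    have hxW : ψ x ∈ W := by
      refine mem_iInter₂.mpr fun y hy => ?_
      rw [Set.Finite.mem_toFinset] at hy
      exact ⟨y, ⟨(hU y).1, hy.2⟩, hy.1⟩
    refine ⟨D ∩ ψ ⁻¹' W, ?_, hD.inter (hWopen.preimage hcont), hxD, hxW⟩
    rintro x' ⟨hx'D, hx'W⟩
    refine ⟨hx'D, hxk.trans ?_⟩
    have key : ∀ y ∈ ψ ⁻¹' {ψ x} ∩ D, ∃ w, w ∈ U y ∩ D ∧ ψ w = ψ x' := by
      intro y hy
      obtain ⟨w, hw1, hw2⟩ := mem_iInter₂.mp hx'W y ((hfin (ψ x)).mem_toFinset.mpr hy)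
      exact ⟨w, hw1, hw2⟩
    set f : X → X := fun y =>
      if h : ∃ w, w ∈ U y ∩ D ∧ ψ w = ψ x' then h.choose else y with hfdef
    have hf : ∀ y ∈ ψ ⁻¹' {ψ x} ∩ D, f y ∈ U y ∩ D ∧ ψ (f y) = ψ x' := by
      intro y hy
      have h := key y hy
      simp only [hfdef, dif_pos h]
      exact h.choose_spec
    apply Set.encard_le_encard_of_injOn (f := f)
    · intro y hy
      exact ⟨(hf y hy).2, (hf y hy).1.2⟩
    · intro y hy y' hy' heq
      by_contra hne
      have hd := hdisj hy hy' hne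
      exact (Set.disjoint_left.mp hd) (hf y hy).1.1 (heq ▸ (hf y' hy').1.1)
  -- `Dn` as a difference of open sets
  have hDnE : Dn = E n \ E (n + 1) := by
    ext x
    rw [hDn', hEdef]
    simp only [mem_diff, mem_setOf_eq]
    rw [(hfin (ψ x)).encard_eq_coe_toFinset_card]
    set m := (hfin (ψ x)).toFinset.card
    constructor
    · rintro ⟨hxD, hm⟩
      have : m = n := by exact_mod_cast hm
      subst this
      refine ⟨⟨hxD, le_refl _⟩, ?_⟩
      rintro ⟨-, h⟩
      have : m + 1 ≤ m := by exact_mod_cast h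
      omega
    · rintro ⟨⟨hxD, h1⟩, h2⟩
      have h1' : n ≤ m := by exact_mod_cast h1
      have h2' : ¬ (n + 1 ≤ m) := fun h => h2 ⟨hxD, by exact_mod_cast h⟩
      have : m = n := by omega
      exact ⟨hxD, by exact_mod_cast congrArg (Nat.cast : ℕ → ℕ∞) this⟩
  have hDnm : MeasurableSet Dn := by
    rw [hDnE]
    exact (hEopen n).measurableSet.diff (hEopen (n + 1)).measurableSet
  have hDnsubD : Dn ⊆ D := fun x hx => ((hDn' x).mp hx).1
  -- the fiber of a point of `Dn` is contained in `Dn`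
  have hfibDn : ∀ x ∈ Dn, ψ ⁻¹' {ψ x} ∩ D ⊆ Dn := by
    intro x hx y hy
    have hyx : ψ y = ψ x := hy.1
    rw [hDn' y, hyx]
    exact ⟨hy.2, ((hDn' x).mp hx).2⟩
  -- dispose of the trivial case
  rcases Dn.eq_empty_or_nonempty with hne | hne
  · refine ⟨fun _ => ∅, fun _ => MeasurableSet.empty, fun i j _ => by
      simp [Function.onFun], by simp [hne], fun j => by
        rw [hne, Set.image_empty]; exact Set.bijOn_empty ψ⟩
  -- choose the countable cover on which ψ is injective
  choose U hUo hUx hUinj using hloc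
  obtain ⟨T, hTc, hTu⟩ :=
    TopologicalSpace.isOpen_iUnion_countable (fun p : Dn => U p p.2) (fun p => hUo p p.2)
  have hTne : T.Nonempty := by
    by_contra h
    rw [Set.not_nonempty_iff_eq_empty] at h
    obtain ⟨x, hx⟩ := hne
    have : x ∈ ⋃ p : Dn, U p p.2 := mem_iUnion.mpr ⟨⟨x, hx⟩, hUx x hx⟩
    rw [← hTu, h] at this
    simpa using this
  obtain ⟨e, he⟩ := hTc.exists_eq_range hTne
  set V : ℕ → Set X := fun i => U (e i) (e i).2 with hVdef
  have hVo : ∀ i, IsOpen (V i) := fun i => hUo _ _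
  have hVinj : ∀ i, Set.InjOn ψ (Dn ∩ V i) := fun i => hUinj _ _
  have hVcov : ∀ x ∈ Dn, ∃ i, x ∈ V i := by
    intro x hx
    have : x ∈ ⋃ p : Dn, U p p.2 := mem_iUnion.mpr ⟨⟨x, hx⟩, hUx x hx⟩
    rw [← hTu] at this
    obtain ⟨p, hpT, hp⟩ := mem_iUnion₂.mp this
    have : p ∈ Set.range e := he ▸ hpT
    obtain ⟨i, rfl⟩ := this
    exact ⟨i, hp⟩
  -- the disjointified pieces
  set A : ℕ → Set X := fun i => (Dn ∩ V i) \ ⋃ k ∈ Finset.range i, V k with hAdef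
  set idx : X → ℕ := fun x => if h : ∃ i, x ∈ V i then Nat.find h else 0 with hidxdef
  have hAidx : ∀ x ∈ Dn, x ∈ A (idx x) := by
    intro x hx
    have h : ∃ i, x ∈ V i := hVcov x hx
    simp only [hidxdef, dif_pos h]
    refine ⟨⟨hx, Nat.find_spec h⟩, ?_⟩
    intro hmem
    obtain ⟨k, hk1, hk2⟩ := mem_iUnion₂.mp hmem
    exact Nat.find_min h (Finset.mem_range.mp hk1) hk2
  have hidxA : ∀ i, ∀ x ∈ A i, idx x = i := by
    intro i x hx
    have h : ∃ i, x ∈ V i := ⟨i, hx.1.2⟩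
    simp only [hidxdef, dif_pos h]
    rcases lt_trichotomy (Nat.find h) i with hlt | heq | hgt
    · exact absurd (mem_iUnion₂.mpr ⟨Nat.find h, Finset.mem_range.mpr hlt, Nat.find_spec h⟩)
        hx.2
    · exact heq
    · exact absurd hx.1.2 (Nat.find_min h hgt)
  have hAsub : ∀ i, A i ⊆ Dn := fun i x hx => hx.1.1
  have hAinj : ∀ i, Set.InjOn ψ (A i) := fun i => (hVinj i).mono fun x hx => hx.1
  have hAm : ∀ i, MeasurableSet (A i) := by
    intro i
    exact (hDnm.inter (hVo i).measurableSet).diff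
      (isOpen_biUnion fun k _ => hVo k).measurableSet
  -- images of the pieces are measurable (σ-compactness argument)
  have hAim : ∀ i, MeasurableSet (ψ '' A i) := by
    intro i
    set O : Set X := E n ∩ V i with hOdef
    set C : Set X := E (n + 1) ∪ ⋃ k ∈ Finset.range i, V k with hCdef
    have hO : IsOpen O := (hEopen n).inter (hVo i)
    have hC : IsOpen C := (hEopen (n + 1)).union (isOpen_biUnion fun k _ => hVo k)
    have hA : A i = O \ C := by
      rw [hAdef, hDnE, hOdef, hCdef]
      ext x
      simp only [mem_diff, mem_inter_iff, mem_union]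
      tauto
    have hAK : A i ⊆ closure D := fun x hx =>
      subset_closure (hDnsubD (hAsub i hx))
    -- σ-compact decomposition of `O \ C`
    set S : ℕ → Set X := fun m => {x ∈ closure D | (m : ℝ≥0∞)⁻¹ ≤ infEdist x Oᶜ}
      with hSdef
    have hScl : ∀ m, IsClosed (S m) := by
      intro m
      have : S m = closure D ∩ {x | (m : ℝ≥0∞)⁻¹ ≤ infEdist x Oᶜ} := rfl
      rw [this]
      exact isClosed_closure.inter (isClosed_le continuous_const continuous_infEdist)
    have hScomp : ∀ m, IsCompact (S m \ C) := fun m =>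
      hDc.of_isClosed_subset ((hScl m).sdiff hC) fun x hx => hx.1.1
    have hAeq : A i = ⋃ m, (S m \ C) := by
      ext x
      constructor
      · intro hx
        have hxK : x ∈ closure D := hAK hx
        have hxO : x ∈ O := (hA ▸ hx).1
        have hpos : 0 < infEdist x Oᶜ := by
          change 0 < Metric.infEDist x Oᶜ
          rw [infEdist_pos_iff_notMem_closure, hO.isClosed_compl.closure_eq]
          simpa using hxO
        obtain ⟨m, hm⟩ := ENNReal.exists_inv_nat_lt hpos.ne'
        exact mem_iUnion.mpr ⟨m, ⟨⟨hxK, hm.le⟩, (hA ▸ hx).2⟩⟩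
      · intro hx
        obtain ⟨m, ⟨⟨hxK, hm⟩, hxC⟩⟩ := mem_iUnion.mp hx
        rw [hA]
        refine ⟨?_, hxC⟩
        have hpos : 0 < infEdist x Oᶜ :=
          lt_of_lt_of_le (by simp [ENNReal.inv_pos]) hm
        change 0 < Metric.infEDist x Oᶜ at hpos
        rw [infEdist_pos_iff_notMem_closure, hO.isClosed_compl.closure_eq] at hpos
        simpa using hpos
    rw [hAeq, image_iUnion]
    exact MeasurableSet.iUnion fun m => ((hScomp m).image hcont).isClosed.measurableSet
  -- the rank function
  set g : ℕ → X → ℕ := fun i x => ((Finset.range i).filter fun k => ψ x ∈ ψ '' A k).card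
    with hgdef
  have hgm : ∀ i, Measurable (g i) := by
    intro i
    have : g i = fun x => ∑ k ∈ Finset.range i, if ψ x ∈ ψ '' A k then 1 else 0 :=
      funext fun x => Finset.card_filter _ _
    rw [this]
    exact Finset.measurable_sum _ fun k _ =>
      Measurable.ite (hψm (hAim k)) measurable_const measurable_const
  -- the counting identity: the rank of `x` counts the fiber points with smaller index
  have hcount : ∀ z : Z, ∀ x, x ∈ Dn → ψ x = z →
      g (idx x) x = ((hfin z).toFinset.filter fun w => idx w < idx x).card := by
    intro z x hx hxz
    refine Finset.card_bij (fun k hk => ((Finset.mem_filter.mp hk).2).choose) ?_ ?_ ?_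
    · intro k hk
      obtain ⟨hk1, hk2⟩ := Finset.mem_filter.mp hk
      obtain ⟨hwA, hwψ⟩ := hk2.choose_spec
      have hwDn : hk2.choose ∈ Dn := hAsub k hwA
      rw [Finset.mem_filter, (hfin z).mem_toFinset]
      refine ⟨⟨by rw [mem_preimage, hwψ, hxz]; rfl, hDnsubD hwDn⟩, ?_⟩
      rw [hidxA k _ hwA]
      exact Finset.mem_range.mp hk1
    · intro k hk k' hk' heq
      obtain ⟨hwA, _⟩ := (Finset.mem_filter.mp hk).2.choose_spec
      obtain ⟨hwA', _⟩ := (Finset.mem_filter.mp hk').2.choose_spec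
      have heq' : (Finset.mem_filter.mp hk).2.choose = (Finset.mem_filter.mp hk').2.choose :=
        heq
      rw [← hidxA k _ hwA, ← hidxA k' _ hwA', heq']
    · intro w hw
      obtain ⟨hwF, hwlt⟩ := Finset.mem_filter.mp hw
      rw [(hfin z).mem_toFinset] at hwF
      have hwDn : w ∈ Dn := by
        have := hfibDn x hx
        rw [hxz] at this
        exact this hwF
      have hwA : w ∈ A (idx w) := hAidx w hwDn
      have hmem : idx w ∈ (Finset.range (idx x)).filter fun k => ψ x ∈ ψ '' A k := by
        rw [Finset.mem_filter, Finset.mem_range]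
        refine ⟨hwlt, ⟨w, hwA, ?_⟩⟩
        rw [hxz]; exact hwF.1
      refine ⟨idx w, hmem, ?_⟩
      obtain ⟨hwA', hwψ'⟩ := (Finset.mem_filter.mp hmem).2.choose_spec
      exact hAinj (idx w) hwA hwA' (by rw [hwψ']; rw [hxz]; exact hwF.1) |>.symm
  -- cardinality of fibers over `Dn`
  have hGcard : ∀ x ∈ Dn, (hfin (ψ x)).toFinset.card = n := by
    intro x hx
    have := ((hDn' x).mp hx).2
    rw [(hfin (ψ x)).encard_eq_coe_toFinset_card] at this
    exact_mod_cast this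
  -- rank is bounded by `n - 1`
  have hbound : ∀ x ∈ Dn, g (idx x) x < n := by
    intro x hx
    rw [hcount (ψ x) x hx rfl]
    have hxF : x ∈ (hfin (ψ x)).toFinset := by
      rw [(hfin (ψ x)).mem_toFinset]
      exact ⟨rfl, hDnsubD hx⟩
    have hsub : ((hfin (ψ x)).toFinset.filter fun w => idx w < idx x) ⊆
        (hfin (ψ x)).toFinset.erase x := by
      intro w hw
      obtain ⟨hw1, hw2⟩ := Finset.mem_filter.mp hw
      exact Finset.mem_erase.mpr ⟨fun h => by subst h; exact lt_irrefl _ hw2, hw1⟩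
    calc ((hfin (ψ x)).toFinset.filter fun w => idx w < idx x).card
        ≤ ((hfin (ψ x)).toFinset.erase x).card := Finset.card_le_card hsub
      _ = n - 1 := by rw [Finset.card_erase_of_mem hxF, hGcard x hx]
      _ < n := by omega
  -- strict monotonicity of the rank along the fiber
  have hmono : ∀ z : Z, ∀ x, x ∈ Dn → ∀ x', x' ∈ Dn → ψ x = z → ψ x' = z →
      idx x < idx x' → g (idx x) x < g (idx x') x' := by
    intro z x hx x' hx' hxz hx'z hlt
    rw [hcount z x hx hxz, hcount z x' hx' hx'z]
    have hxF : x ∈ (hfin z).toFinset := by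
      rw [(hfin z).mem_toFinset]
      exact ⟨by rw [mem_preimage, hxz]; rfl, hDnsubD hx⟩
    have hsub : insert x ((hfin z).toFinset.filter fun w => idx w < idx x) ⊆
        (hfin z).toFinset.filter fun w => idx w < idx x' := by
      intro w hw
      rcases Finset.mem_insert.mp hw with rfl | hw
      · exact Finset.mem_filter.mpr ⟨hxF, hlt⟩
      · obtain ⟨h1, h2⟩ := Finset.mem_filter.mp hw
        exact Finset.mem_filter.mpr ⟨h1, h2.trans hlt⟩
    have hnotmem : x ∉ (hfin z).toFinset.filter fun w => idx w < idx x := by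
      intro h
      exact lt_irrefl _ (Finset.mem_filter.mp h).2
    calc ((hfin z).toFinset.filter fun w => idx w < idx x).card
        < (insert x ((hfin z).toFinset.filter fun w => idx w < idx x)).card := by
          rw [Finset.card_insert_of_notMem hnotmem]; omega
      _ ≤ ((hfin z).toFinset.filter fun w => idx w < idx x').card :=
          Finset.card_le_card hsub
  -- injectivity of "same rank on the same fiber"
  have hrinj : ∀ x, x ∈ Dn → ∀ x', x' ∈ Dn → ψ x = ψ x' →
      g (idx x) x = g (idx x') x' → x = x' := by
    intro x hx x' hx' hψeq hg
    have hidxeq : idx x = idx x' := by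
      rcases lt_trichotomy (idx x) (idx x') with h | h | h
      · exact absurd hg (ne_of_lt (hmono (ψ x) x hx x' hx' rfl hψeq.symm h))
      · exact h
      · exact absurd hg.symm (ne_of_lt (hmono (ψ x) x' hx' x hx hψeq.symm rfl h))
    have h1 : x ∈ A (idx x) := hAidx x hx
    have h2 : x' ∈ A (idx x) := hidxeq ▸ hAidx x' hx'
    exact hAinj (idx x) h1 h2 hψeq
  -- the pieces
  set P : Fin n → Set X := fun j => ⋃ i, A i ∩ {x | g i x = (j : ℕ)} with hPdef
  have hPmem : ∀ (j : Fin n) x, x ∈ P j ↔ x ∈ Dn ∧ g (idx x) x = (j : ℕ) := by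
    intro j x
    constructor
    · intro hx
      obtain ⟨i, hxi, hxg⟩ := mem_iUnion.mp hx
      have : idx x = i := hidxA i x hxi
      exact ⟨hAsub i hxi, by rw [this]; exact hxg⟩
    · rintro ⟨hx, hg⟩
      exact mem_iUnion.mpr ⟨idx x, hAidx x hx, hg⟩
  refine ⟨P, ?_, ?_, ?_, ?_⟩
  · intro j
    exact MeasurableSet.iUnion fun i =>
      (hAm i).inter ((hgm i) (measurableSet_singleton _))
  · intro j j' hjj'
    rw [Function.onFun, Set.disjoint_left]
    intro x hx hx'
    obtain ⟨hxDn, hg⟩ := (hPmem j x).mp hx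
    obtain ⟨-, hg'⟩ := (hPmem j' x).mp hx'
    exact hjj' (Fin.ext (hg.symm.trans hg'))
  · ext x
    simp only [mem_iUnion]
    constructor
    · rintro ⟨j, hj⟩
      exact ((hPmem j x).mp hj).1
    · intro hx
      exact ⟨⟨g (idx x) x, hbound x hx⟩, (hPmem _ x).mpr ⟨hx, rfl⟩⟩
  · intro j
    refine ⟨?_, ?_, ?_⟩
    · intro x hx
      exact mem_image_of_mem ψ ((hPmem j x).mp hx).1
    · intro x hx x' hx' hψeq
      obtain ⟨hxDn, hg⟩ := (hPmem j x).mp hx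
      obtain ⟨hx'Dn, hg'⟩ := (hPmem j x').mp hx'
      exact hrinj x hxDn x' hx'Dn hψeq (by rw [hg, hg'])
    · rintro z ⟨x₀, hx₀, rfl⟩
      -- fiber of `z := ψ x₀` inside `Dn`
      have hGsub : ∀ w ∈ (hfin (ψ x₀)).toFinset, w ∈ Dn := by
        intro w hw
        rw [(hfin (ψ x₀)).mem_toFinset] at hw
        exact hfibDn x₀ hx₀ hw
      have hcard : Finset.card (Finset.range n) ≤ (hfin (ψ x₀)).toFinset.card := by
        rw [Finset.card_range, hGcard x₀ hx₀]
      have hsurj := Finset.surj_on_of_inj_on_of_card_le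
        (s := (hfin (ψ x₀)).toFinset) (t := Finset.range n)
        (fun w _ => g (idx w) w)
        (fun w hw => Finset.mem_range.mpr (hbound w (hGsub w hw)))
        (fun w w' hw hw' heq => by
          have hwF := ((hfin (ψ x₀)).mem_toFinset).mp hw
          have hw'F := ((hfin (ψ x₀)).mem_toFinset).mp hw'
          exact hrinj w (hGsub w hw) w' (hGsub w' hw')
            (by rw [show ψ w = ψ x₀ from hwF.1, show ψ w' = ψ x₀ from hw'F.1]) heq)
        hcard
      obtain ⟨w, hwmem, hwj⟩ := hsurj (j : ℕ) (Finset.mem_range.mpr j.2)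
      have hwF := ((hfin (ψ x₀)).mem_toFinset).mp hwmem
      refine ⟨w, (hPmem j w).mpr ⟨hGsub w hwmem, hwj.symm⟩, hwF.1⟩
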